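/- Let G be a graph on n vertices with a universal vertex u, and let C be a configuration on G of size at least n + 2t − 2. If C(u) = 0 then pot(C) ≥ t, and if C(u) ≥ 1 then pot(C) ≥ t − 1; in either case C is t-fold u-solvable. -/

import Mathlib

open SimpleGraph

open Classical in
/-- A single pebbling step: remove two pebbles from `u` and add one to an adjacent `v`. -/
def PebStep {V : Type*} (G : SimpleGraph V) (C C' : V → ℕ) : Prop :=
  ∃ u v, G.Adj u v ∧ 2 ≤ C u ∧
    ∀ w, C' w = if w = u then C w - 2 else if w = v then C w + 1 else C w

/-- `C` is `t`-fold `r`-solvable: some sequence of pebbling steps places `t` pebbles on `r`. -/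
def Solvable {V : Type*} (G : SimpleGraph V) (C : V → ℕ) (r : V) (t : ℕ) : Prop :=
  ∃ C', Relation.ReflTransGen (PebStep G) C C' ∧ t ≤ C' r

/-- The size of a configuration: total number of pebbles. -/
def confSize {V : Type*} [Fintype V] (C : V → ℕ) : ℕ := ∑ v, C v

/-- The potential of a configuration: the number of pairwise disjoint pairs of
pebbles sitting on common vertices, `∑ v, ⌊C v / 2⌋`. -/
def potential {V : Type*} [Fintype V] (C : V → ℕ) : ℕ := ∑ v, C v / 2

/-- Number of vertices with no pebbles. -/
noncomputable def numZeros {V : Type*} [Fintype V] (C : V → ℕ) : ℕ :=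
  {v : V | C v = 0}.ncard

/-- The `t`-pebbling number of `G` with root `r`. -/
noncomputable def piT {V : Type*} [Fintype V] (G : SimpleGraph V) (r : V) (t : ℕ) : ℕ :=
  sInf {m | ∀ C : V → ℕ, m ≤ confSize C → Solvable G C r t}

/-- The `t`-pebbling number of `G`. -/
noncomputable def piTG {V : Type*} [Fintype V] (G : SimpleGraph V) (t : ℕ) : ℕ :=
  Finset.univ.sup fun r => piT G r t

/-- `G` is `k`-connected: more than `k` vertices and deleting fewer than `k`
vertices leaves a connected graph. -/
def KConnected {V : Type*} [Fintype V] (G : SimpleGraph V) (k : ℕ) : Prop :=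
  k < Fintype.card V ∧
    ∀ S : Set V, S.ncard < k → ((⊤ : G.Subgraph).deleteVerts S).coe.Connected

/-- `u` is a universal vertex: adjacent to every other vertex. -/
def IsUniversal {V : Type*} (G : SimpleGraph V) (u : V) : Prop :=
  ∀ v, v ≠ u → G.Adj u v

open Classical in
lemma reach_univ {V : Type*} [Fintype V] (G : SimpleGraph V) (u : V)
    (hu : _root_.IsUniversal G u) :
    ∀ n (C : V → ℕ), (∑ v ∈ Finset.univ.erase u, C v / 2) = n →
      ∃ C', Relation.ReflTransGen (PebStep G) C C' ∧ C u + n ≤ C' u := by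
  intro n
  induction n with
  | zero => exact fun C _ => ⟨C, .refl, by omega⟩
  | succ n ih =>
    intro C hC
    have hex : ∃ v ∈ Finset.univ.erase u, 2 ≤ C v := by
      by_contra h
      push_neg at h
      have : ∑ v ∈ Finset.univ.erase u, C v / 2 = 0 :=
        Finset.sum_eq_zero fun v hv => by have := h v hv; omega
      omega
    obtain ⟨v, hv, h2⟩ := hex
    have hvne : v ≠ u := (Finset.mem_erase.1 hv).1
    set C₁ : V → ℕ := fun w => if w = v then C w - 2 else if w = u then C w + 1 else C w
      with hC₁
    have hstep : PebStep G C C₁ :=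
      ⟨v, u, (hu v hvne).symm, h2, fun w => by simp [hC₁]⟩
    have hsum : (∑ w ∈ Finset.univ.erase u, C₁ w / 2) = n := by
      have h1 : (∑ w ∈ Finset.univ.erase u, C w / 2) =
          C v / 2 + ∑ w ∈ (Finset.univ.erase u).erase v, C w / 2 :=
        (Finset.add_sum_erase _ _ hv).symm
      have h2' : (∑ w ∈ Finset.univ.erase u, C₁ w / 2) =
          C₁ v / 2 + ∑ w ∈ (Finset.univ.erase u).erase v, C₁ w / 2 :=
        (Finset.add_sum_erase _ _ hv).symm
      have h3 : ∑ w ∈ (Finset.univ.erase u).erase v, C₁ w / 2 =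
          ∑ w ∈ (Finset.univ.erase u).erase v, C w / 2 := by
        refine Finset.sum_congr rfl fun w hw => ?_
        have hwv : w ≠ v := (Finset.mem_erase.1 hw).1
        have hwu : w ≠ u := (Finset.mem_erase.1 (Finset.mem_erase.1 hw).2).1
        simp [hC₁, hwv, hwu]
      have h4 : C₁ v = C v - 2 := by simp [hC₁]
      rw [h2', h3, h4]
      rw [h1] at hC
      omega
    obtain ⟨C', hr, hle⟩ := ih C₁ hsum
    have hCu : C₁ u = C u + 1 := by simp [hC₁, hvne.symm]
    exact ⟨C', .head hstep hr, by omega⟩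

theorem universal_root_solvable {V : Type*} [Fintype V] (G : SimpleGraph V)
    (u : V) (hu : _root_.IsUniversal G u) (t : ℕ) (C : V → ℕ)
    (hsize : Fintype.card V + 2 * t - 2 ≤ confSize C) :
    (C u = 0 → t ≤ potential C) ∧ (1 ≤ C u → t - 1 ≤ potential C) ∧
    Solvable G C u t := by
  classical
  set S : ℕ := ∑ v ∈ Finset.univ.erase u, C v / 2 with hS
  have hpot : potential C = C u / 2 + S := by
    rw [potential, ← Finset.add_sum_erase _ _ (Finset.mem_univ u)]
  have hn : 1 ≤ Fintype.card V := Fintype.card_pos_iff.2 ⟨u⟩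
  -- counting bound
  have hcount : confSize C ≤ 2 * potential C +
      (Finset.univ.filter fun v => C v ≠ 0).card := by
    have h1 : confSize C ≤ ∑ v, (2 * (C v / 2) + if C v = 0 then 0 else 1) :=
      Finset.sum_le_sum fun v _ => by split <;> omega
    have h2 : ∑ v, (2 * (C v / 2) + if C v = 0 then 0 else 1) =
        2 * potential C + (Finset.univ.filter fun v => C v ≠ 0).card := by
      rw [Finset.sum_add_distrib, ← Finset.mul_sum, potential, Finset.card_filter]
      congr 1
      exact Finset.sum_congr rfl fun v _ => by split <;> simp_all
    omega
  have hcard : (Finset.univ.filter fun v => C v ≠ 0).card ≤ Fintype.card V :=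
    le_trans (Finset.card_filter_le _ _) (le_of_eq (Finset.card_univ))
  have hpot0 : C u = 0 → t ≤ potential C := by
    intro h0
    have hsub : (Finset.univ.filter fun v => C v ≠ 0) ⊆ Finset.univ.erase u := by
      intro v hv
      simp only [Finset.mem_filter] at hv
      refine Finset.mem_erase.2 ⟨fun h => hv.2 (h ▸ h0), Finset.mem_univ v⟩
    have hcard0 : (Finset.univ.filter fun v => C v ≠ 0).card ≤ Fintype.card V - 1 := by
      calc _ ≤ (Finset.univ.erase u).card := Finset.card_le_card hsub
        _ = Fintype.card V - 1 := by rw [Finset.card_erase_of_mem (Finset.mem_univ u), Finset.card_univ]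
    omega
  have hpot1 : 1 ≤ C u → t - 1 ≤ potential C := fun _ => by omega
  refine ⟨hpot0, hpot1, ?_⟩
  obtain ⟨C', hr, hle⟩ := reach_univ G u hu S C rfl
  refine ⟨C', hr, le_trans ?_ hle⟩
  by_cases h0 : C u = 0
  · have := hpot0 h0
    rw [hpot, h0] at this
    omega
  · have h1 : 1 ≤ C u := by omega
    have := hpot1 h1
    rw [hpot] at this
    omega
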